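/- Let ξ be a symmetric random variable with P(|ξ| > x) = exp(-x^m) for x ≥ 0, where m > 1. Then the cumulant generating function φ(λ) = log E[exp(λξ)] satisfies: there exist constants 0 < C₁ ≤ C₂ < ∞ (depending on m) such that C₁ ψ(λ) ≤ φ(λ) ≤ C₂ ψ(λ) for all λ ∈ ℝ, where ψ(λ) = λ² for |λ| ≤ 2 and ψ(λ) = C₃|λ|^{m/(m-1)} for |λ| > 2 (for an appropriate constant C₃ > 0). -/

import Mathlib

open MeasureTheory ProbabilityTheory Real Set
open scoped ENNReal

lemma cosh_ident (t : ℝ) : Real.cosh t = 1 + 2 * Real.sinh (t/2) ^ 2 := by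
  have h := Real.cosh_two_mul (t/2)
  have h2 : 2 * (t/2) = t := by ring
  rw [h2] at h
  rw [h, Real.cosh_sq]; ring

lemma cosh_lower (t : ℝ) : 1 + t^2/2 ≤ Real.cosh t := by
  rw [← Real.cosh_abs, cosh_ident]
  have h1 : |t|/2 ≤ Real.sinh (|t|/2) := Real.self_le_sinh_iff.2 (by positivity)
  have h2 : (|t|/2)^2 ≤ Real.sinh (|t|/2)^2 := by
    apply pow_le_pow_left₀ (by positivity) h1
  have := sq_abs t
  nlinarith

lemma sinh_upper {u : ℝ} (hu : 0 ≤ u) : Real.sinh u ≤ u * Real.exp u := by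
  rw [Real.sinh_eq]
  have h : (-(2*u)) + 1 ≤ Real.exp (-(2*u)) := Real.add_one_le_exp _
  have he : Real.exp (-u) = Real.exp (-(2*u)) * Real.exp u := by
    rw [← Real.exp_add]; ring_nf
  have hp := Real.exp_pos u
  nlinarith [Real.exp_pos (-(2*u))]

lemma cosh_upper (t : ℝ) : Real.cosh t ≤ 1 + t^2/2 * Real.exp |t| := by
  rw [← Real.cosh_abs, cosh_ident]
  have h1 : Real.sinh (|t|/2) ≤ (|t|/2) * Real.exp (|t|/2) := sinh_upper (by positivity)
  have h0 : 0 ≤ Real.sinh (|t|/2) := Real.sinh_nonneg_iff.2 (by positivity)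
  have h2 : Real.sinh (|t|/2)^2 ≤ ((|t|/2) * Real.exp (|t|/2))^2 :=
    pow_le_pow_left₀ h0 h1 2
  have he : Real.exp (|t|/2) ^ 2 = Real.exp |t| := by
    rw [sq, ← Real.exp_add]; ring_nf
  have := sq_abs t
  nlinarith [Real.exp_pos |t|]

lemma young_aux {m : ℝ} (hm : 1 < m) {s x : ℝ} (hs : 0 ≤ s) (hx : 0 ≤ x) :
    s * x ≤ 2 ^ (1/(m-1)) * s ^ (m/(m-1)) + x ^ m / 2 := by
  have hm1 : (0:ℝ) < m - 1 := by linarith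
  have hA : (0:ℝ) < (2:ℝ) ^ (1/(m-1)) := Real.rpow_pos_of_pos (by norm_num) _
  rcases eq_or_lt_of_le hs with h0 | hs0
  · have : s = 0 := h0.symm
    subst this
    have : (0:ℝ) ≤ x ^ m := Real.rpow_nonneg hx m
    have : (0:ℝ) ≤ 2 ^ (1/(m-1)) * (0:ℝ) ^ (m/(m-1)) := by positivity
    nlinarith [Real.rpow_nonneg hx m]
  have hfield : (m-1)*(1/(m-1)) = 1 := by field_simp
  have hexp : 1 + 1/(m-1) = m/(m-1) := by field_simp; ring
  rcases le_or_gt (x ^ (m-1)) (2*s) with hc | hc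
  · have hx2 : x ≤ (2*s) ^ (1/(m-1)) := by
      calc x = x ^ ((m-1)*(1/(m-1))) := by rw [hfield, Real.rpow_one]
        _ = (x ^ (m-1)) ^ (1/(m-1)) := Real.rpow_mul hx _ _
        _ ≤ (2*s) ^ (1/(m-1)) := Real.rpow_le_rpow (Real.rpow_nonneg hx _) hc (by positivity)
    have key : s * ((2*s) ^ (1/(m-1))) = 2 ^ (1/(m-1)) * s ^ (m/(m-1)) := by
      rw [Real.mul_rpow (by norm_num) hs, ← hexp, Real.rpow_add hs0, Real.rpow_one]
      ring
    have : s * x ≤ s * ((2*s) ^ (1/(m-1))) := by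
      exact mul_le_mul_of_nonneg_left hx2 hs
    calc s * x ≤ 2 ^ (1/(m-1)) * s ^ (m/(m-1)) := by rw [← key]; exact this
      _ ≤ _ := by nlinarith [Real.rpow_nonneg hx m]
  · have hx0 : 0 < x := by
      by_contra h
      push_neg at h
      have hx0 : x = 0 := le_antisymm h hx
      rw [hx0, Real.zero_rpow (by linarith : m - 1 ≠ 0)] at hc
      linarith
    have hxm : x ^ (m-1) * x = x ^ m := by
      nth_rewrite 2 [← Real.rpow_one x]
      rw [← Real.rpow_add hx0]
      ring_nf
    have : s * x ≤ (x ^ (m-1) / 2) * x := by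
      apply mul_le_mul_of_nonneg_right (by linarith) hx
    have h2 : (x ^ (m-1) / 2) * x = x ^ m / 2 := by rw [← hxm]; ring
    nlinarith [Real.rpow_nonneg (show (0:ℝ) ≤ 2 by norm_num) (1/(m-1)), Real.rpow_nonneg hs0.le (m/(m-1))]

lemma yint {Ω : Type*} [MeasurableSpace Ω] (μ : Measure Ω) [IsProbabilityMeasure μ]
    (ξ : Ω → ℝ) (hξ : Measurable ξ) (m : ℝ) (hm : 1 < m)
    (htail : ∀ x : ℝ, 0 ≤ x →
      (μ {ω | x < |ξ ω|}).toReal = Real.exp (-(x ^ m))) :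
    Integrable (fun ω => Real.exp (|ξ ω| ^ m / 2)) μ ∧
      ∫ ω, Real.exp (|ξ ω| ^ m / 2) ∂μ ≤ 2 := by
  have hm0 : (0:ℝ) < m := lt_trans one_pos hm
  set Y : Ω → ℝ := fun ω => Real.exp (|ξ ω| ^ m / 2) with hYdef
  have hYm : Measurable Y :=
    (((Real.continuous_rpow_const hm0.le).measurable.comp hξ.abs).div_const 2).exp
  have hYnn : ∀ ω, 0 ≤ Y ω := fun ω => (Real.exp_pos _).le
  have hμt : ∀ x : ℝ, 0 ≤ x →
      μ {ω | x < |ξ ω|} = ENNReal.ofReal (Real.exp (-(x ^ m))) := by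
    intro x hx
    rw [← htail x hx, ENNReal.ofReal_toReal (measure_ne_top μ _)]
  have key : ∫⁻ ω, ENNReal.ofReal (Y ω) ∂μ = ∫⁻ t in Ioi (0:ℝ), μ {ω | t < Y ω} :=
    lintegral_eq_lintegral_meas_lt μ (ae_of_all _ hYnn) hYm.aemeasurable
  have hsplit : (Ioi (0:ℝ)) = Ioc 0 1 ∪ Ioi 1 := (Ioc_union_Ioi_eq_Ioi zero_le_one).symm
  have hdisj : Disjoint (Ioc (0:ℝ) 1) (Ioi 1) := Ioc_disjoint_Ioi le_rfl
  have hpart1 : ∫⁻ t in Ioc (0:ℝ) 1, μ {ω | t < Y ω} ≤ 1 := by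
    calc ∫⁻ t in Ioc (0:ℝ) 1, μ {ω | t < Y ω} ≤ ∫⁻ _ in Ioc (0:ℝ) 1, 1 :=
          lintegral_mono fun t => prob_le_one
      _ = 1 := by
          rw [lintegral_const]
          simp [Real.volume_Ioc]
  have heq : ∀ t ∈ Ioi (1:ℝ), μ {ω | t < Y ω} = ENNReal.ofReal (t ^ (-2:ℝ)) := by
    intro t ht
    rw [mem_Ioi] at ht
    have ht0 : (0:ℝ) < t := by linarith
    have hlt : 0 < Real.log t := Real.log_pos ht
    have h2l : (0:ℝ) ≤ 2 * Real.log t := by linarith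
    set r : ℝ := (2 * Real.log t) ^ m⁻¹ with hr
    have hrnn : 0 ≤ r := Real.rpow_nonneg h2l _
    have hset : {ω | t < Y ω} = {ω | r < |ξ ω|} := by
      ext ω
      simp only [mem_setOf_eq, hYdef]
      rw [show Real.exp (|ξ ω| ^ m / 2) = Real.exp (|ξ ω| ^ m / 2) from rfl]
      constructor
      · intro h
        have h1 : Real.log t < |ξ ω| ^ m / 2 := (Real.log_lt_iff_lt_exp ht0).2 h
        have h2 : 2 * Real.log t < |ξ ω| ^ m := by linarith
        exact (Real.rpow_inv_lt_iff_of_pos h2l (abs_nonneg _) hm0).2 h2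
      · intro h
        have h2 : 2 * Real.log t < |ξ ω| ^ m :=
          (Real.rpow_inv_lt_iff_of_pos h2l (abs_nonneg _) hm0).1 h
        have h1 : Real.log t < |ξ ω| ^ m / 2 := by linarith
        exact (Real.log_lt_iff_lt_exp ht0).1 h1
    rw [hset, hμt r hrnn]
    congr 1
    have hrm : r ^ m = 2 * Real.log t := by
      rw [hr, ← Real.rpow_mul h2l, inv_mul_cancel₀ (ne_of_gt hm0), Real.rpow_one]
    rw [hrm, Real.rpow_def_of_pos ht0]
    congr 1
    ring
  have hpart2 : ∫⁻ t in Ioi (1:ℝ), μ {ω | t < Y ω} = 1 := by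
    rw [setLIntegral_congr_fun measurableSet_Ioi heq]
    rw [← ofReal_integral_eq_lintegral_ofReal
      (integrableOn_Ioi_rpow_of_lt (by norm_num) one_pos)
      (by
        filter_upwards [ae_restrict_mem measurableSet_Ioi] with t ht
        exact Real.rpow_nonneg (le_of_lt (lt_trans one_pos ht)) _)]
    rw [integral_Ioi_rpow_of_lt (by norm_num) one_pos]
    norm_num
  have hle : ∫⁻ ω, ENNReal.ofReal (Y ω) ∂μ ≤ 2 := by
    rw [key, hsplit, lintegral_union measurableSet_Ioi hdisj, hpart2]
    calc (∫⁻ t in Ioc (0:ℝ) 1, μ {ω | t < Y ω}) + 1 ≤ 1 + 1 :=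
          add_le_add_left hpart1 1
      _ = 2 := by norm_num
  have hfin : HasFiniteIntegral Y μ := by
    rw [hasFiniteIntegral_iff_ofReal (ae_of_all _ hYnn)]
    exact lt_of_le_of_lt hle (by norm_num)
  have hint : Integrable Y μ := ⟨hYm.aestronglyMeasurable, hfin⟩
  refine ⟨hint, ?_⟩
  have heq2 := integral_eq_lintegral_of_nonneg_ae (μ := μ) (ae_of_all _ hYnn) hYm.aestronglyMeasurable
  have h2 : ∫ ω, Y ω ∂μ ≤ 2 := by
    rw [heq2]
    calc (∫⁻ ω, ENNReal.ofReal (Y ω) ∂μ).toReal ≤ (2:ℝ≥0∞).toReal :=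
          ENNReal.toReal_mono (by norm_num) hle
      _ = 2 := by norm_num
  exact h2

set_option maxHeartbeats 1000000 in
theorem stmt16
    {Ω : Type*} [MeasurableSpace Ω] (μ : Measure Ω) [IsProbabilityMeasure μ]
    (ξ : Ω → ℝ) (hξ : Measurable ξ) (m : ℝ) (hm : 1 < m)
    (hsymm : μ.map ξ = μ.map (fun ω => -ξ ω))
    (htail : ∀ x : ℝ, 0 ≤ x →
      (μ {ω | x < |ξ ω|}).toReal = Real.exp (-(x ^ m))) :
    ∃ C₁ C₂ C₃ : ℝ, 0 < C₁ ∧ C₁ ≤ C₂ ∧ 0 < C₃ ∧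
      ∀ l : ℝ,
        C₁ * (if |l| ≤ 2 then l ^ 2 else C₃ * |l| ^ (m / (m - 1)))
            ≤ Real.log (∫ ω, Real.exp (l * ξ ω) ∂μ) ∧
          Real.log (∫ ω, Real.exp (l * ξ ω) ∂μ)
            ≤ C₂ * (if |l| ≤ 2 then l ^ 2 else C₃ * |l| ^ (m / (m - 1))) := by
  have hm0 : (0:ℝ) < m := lt_trans one_pos hm
  have hm1 : (0:ℝ) < m - 1 := by linarith
  set q : ℝ := m / (m - 1) with hq
  have hq1 : 1 < q := by
    rw [hq, lt_div_iff₀ hm1]; linarith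
  have hq0 : 0 < q := lt_trans one_pos hq1
  set A : ℝ := 2 ^ (1/(m-1)) with hA
  have hApos : 0 < A := Real.rpow_pos_of_pos (by norm_num) _
  have hyoung : ∀ s x : ℝ, 0 ≤ s → 0 ≤ x → s * x ≤ A * s ^ q + x ^ m / 2 :=
    fun s x hs hx => young_aux hm hs hx
  obtain ⟨hYint, hYle⟩ := yint μ ξ hξ m hm htail
  set Y : Ω → ℝ := fun ω => Real.exp (|ξ ω| ^ m / 2) with hYdef
  have hYnn : ∀ ω, 0 ≤ Y ω := fun ω => (Real.exp_pos _).le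
  -- pointwise exponential bound
  have hptw : ∀ (l : ℝ) (ω : Ω), Real.exp (l * ξ ω) ≤ Real.exp (A * |l| ^ q) * Y ω := by
    intro l ω
    have h1 : l * ξ ω ≤ |l| * |ξ ω| := by
      calc l * ξ ω ≤ |l * ξ ω| := le_abs_self _
        _ = |l| * |ξ ω| := abs_mul _ _
    have h2 : |l| * |ξ ω| ≤ A * |l| ^ q + |ξ ω| ^ m / 2 :=
      hyoung _ _ (abs_nonneg l) (abs_nonneg _)
    calc Real.exp (l * ξ ω) ≤ Real.exp (A * |l| ^ q + |ξ ω| ^ m / 2) :=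
          Real.exp_le_exp.2 (by linarith)
      _ = Real.exp (A * |l| ^ q) * Y ω := by rw [← Real.exp_add]
  -- integrability of exponentials
  have hIntExp : ∀ l : ℝ, Integrable (fun ω => Real.exp (l * ξ ω)) μ := by
    intro l
    apply Integrable.mono (hYint.const_mul (Real.exp (A * |l| ^ q)))
      ((measurable_const.mul hξ).exp.aestronglyMeasurable)
    apply ae_of_all
    intro ω
    rw [Real.norm_eq_abs, Real.abs_exp, Real.norm_eq_abs]
    calc Real.exp (l * ξ ω) ≤ Real.exp (A * |l| ^ q) * Y ω := hptw l ω
      _ ≤ |Real.exp (A * |l| ^ q) * Y ω| := le_abs_self _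
  -- symmetry
  have hZneg : ∀ l : ℝ, ∫ ω, Real.exp (l * ξ ω) ∂μ = ∫ ω, Real.exp (-(l * ξ ω)) ∂μ := by
    intro l
    have hc : Continuous fun x : ℝ => Real.exp (l * x) :=
      Real.continuous_exp.comp (continuous_const.mul continuous_id)
    have h1 : ∫ ω, Real.exp (l * ξ ω) ∂μ = ∫ x, Real.exp (l * x) ∂(μ.map ξ) :=
      (integral_map hξ.aemeasurable hc.aestronglyMeasurable).symm
    rw [h1, hsymm, integral_map (show AEMeasurable (fun ω => -ξ ω) μ from hξ.neg.aemeasurable) hc.aestronglyMeasurable]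
    apply integral_congr_ae
    apply ae_of_all
    intro ω
    simp only [mul_neg]
  have hIntCosh : ∀ l : ℝ, Integrable (fun ω => Real.cosh (l * ξ ω)) μ := by
    intro l
    have heq : (fun ω => Real.cosh (l * ξ ω)) =
        fun ω => (Real.exp (l * ξ ω) + Real.exp (-(l * ξ ω))) / 2 :=
      funext fun ω => Real.cosh_eq _
    rw [heq]
    have h2 : Integrable (fun ω => Real.exp (-(l * ξ ω))) μ := by
      have := hIntExp (-l)
      simpa [neg_mul] using this
    exact ((hIntExp l).add h2).div_const 2
  have hZcosh : ∀ l : ℝ, ∫ ω, Real.exp (l * ξ ω) ∂μ = ∫ ω, Real.cosh (l * ξ ω) ∂μ := by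
    intro l
    have heq : (fun ω => Real.cosh (l * ξ ω)) =
        fun ω => (Real.exp (l * ξ ω) + Real.exp (-(l * ξ ω))) / 2 :=
      funext fun ω => Real.cosh_eq _
    have h2 : Integrable (fun ω => Real.exp (-(l * ξ ω))) μ := by
      have := hIntExp (-l); simpa [neg_mul] using this
    rw [heq]
    rw [integral_div, integral_add (hIntExp l) h2, ← hZneg l]
    ring
  -- the quantity T and c₀
  set T : Ω → ℝ := fun ω => (min |ξ ω| 1) ^ 2 with hT
  have hTm : Measurable T := (hξ.abs.min measurable_const).pow_const 2
  have hT0 : ∀ ω, 0 ≤ T ω := fun ω => sq_nonneg _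
  have hT1 : ∀ ω, T ω ≤ 1 := by
    intro ω
    show (min |ξ ω| 1) ^ 2 ≤ 1
    have h1 : min |ξ ω| 1 ≤ 1 := min_le_right _ _
    have h0 : 0 ≤ min |ξ ω| 1 := le_min (abs_nonneg _) zero_le_one
    nlinarith
  have hTint : Integrable T μ := by
    apply Integrable.mono' (integrable_const (1:ℝ)) hTm.aestronglyMeasurable
    apply ae_of_all
    intro ω
    rw [Real.norm_eq_abs, abs_of_nonneg (hT0 ω)]
    exact hT1 ω
  set c₀ : ℝ := ∫ ω, T ω ∂μ with hc₀
  have hXpos : ∀ᵐ ω ∂μ, 0 < |ξ ω| := by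
    have h1 : μ {ω | 0 < |ξ ω|} = 1 := by
      have h := htail 0 le_rfl
      rw [Real.zero_rpow (ne_of_gt hm0)] at h
      simp only [neg_zero, Real.exp_zero] at h
      rw [← ENNReal.ofReal_toReal (measure_ne_top μ {ω | 0 < |ξ ω|}), h]
      norm_num
    have hms : MeasurableSet {ω | 0 < |ξ ω|} := measurableSet_lt measurable_const hξ.abs
    rw [ae_iff]
    have : {ω | ¬ 0 < |ξ ω|} = {ω | 0 < |ξ ω|}ᶜ := rfl
    rw [this, measure_compl hms (measure_ne_top _ _), h1, measure_univ, tsub_self]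
  have hc₀pos : 0 < c₀ := by
    by_contra hc
    push_neg at hc
    have hnn : 0 ≤ᵐ[μ] T := ae_of_all _ hT0
    have h0 : ∫ ω, T ω ∂μ = 0 := le_antisymm hc (integral_nonneg hT0)
    have hT0ae := (integral_eq_zero_iff_of_nonneg_ae hnn hTint).1 h0
    have hbad : ∀ᵐ ω ∂μ, False := by
      filter_upwards [hT0ae, hXpos] with ω h1 h2
      have : 0 < T ω := pow_pos (lt_min h2 one_pos) 2
      rw [Pi.zero_apply] at h1
      exact absurd h1 (ne_of_gt this)
    rw [ae_iff] at hbad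
    have h1 : μ Set.univ = 0 := by
      rw [← hbad]; congr 1; ext ω; simp
    rw [measure_univ] at h1
    exact one_ne_zero h1
  have hc₀1 : c₀ ≤ 1 := by
    calc c₀ ≤ ∫ _, (1:ℝ) ∂μ := integral_mono hTint (integrable_const 1) hT1
      _ = 1 := by simp
  -- Lower bound 1
  have hLB1 : ∀ l : ℝ, 1 + l ^ 2 / 2 * c₀ ≤ ∫ ω, Real.exp (l * ξ ω) ∂μ := by
    intro l
    rw [hZcosh l]
    have hpt : ∀ ω, 1 + l ^ 2 / 2 * T ω ≤ Real.cosh (l * ξ ω) := by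
      intro ω
      have h1 := cosh_lower (l * ξ ω)
      have hmin0 : 0 ≤ min |ξ ω| 1 := le_min (abs_nonneg _) zero_le_one
      have h2 : T ω ≤ ξ ω ^ 2 := by
        have h3 : (min |ξ ω| 1) ^ 2 ≤ |ξ ω| ^ 2 :=
          pow_le_pow_left₀ hmin0 (min_le_left _ _) 2
        calc T ω ≤ |ξ ω| ^ 2 := h3
          _ = ξ ω ^ 2 := sq_abs _
      have h4 : (l * ξ ω) ^ 2 = l ^ 2 * ξ ω ^ 2 := mul_pow l (ξ ω) 2
      nlinarith [sq_nonneg l]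
    calc 1 + l ^ 2 / 2 * c₀ = ∫ ω, (1 + l ^ 2 / 2 * T ω) ∂μ := by
          rw [integral_add (integrable_const 1) (hTint.const_mul _)]
          simp [hc₀, integral_const_mul]
      _ ≤ ∫ ω, Real.cosh (l * ξ ω) ∂μ :=
          integral_mono ((integrable_const 1).add (hTint.const_mul _)) (hIntCosh l) hpt
  have hZpos : ∀ l : ℝ, 0 < ∫ ω, Real.exp (l * ξ ω) ∂μ := by
    intro l
    have := hLB1 l
    nlinarith [sq_nonneg l, hc₀pos]
  -- Lower bound 2
  have hLB2 : ∀ l : ℝ, ∀ x₀ : ℝ, 0 ≤ x₀ →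
      Real.exp (|l| * x₀ - x₀ ^ m) / 2 ≤ ∫ ω, Real.exp (l * ξ ω) ∂μ := by
    intro l x₀ hx₀
    rw [hZcosh l]
    have hset : MeasurableSet {ω | x₀ < |ξ ω|} := measurableSet_lt measurable_const hξ.abs
    have hmeas : (μ {ω | x₀ < |ξ ω|}).toReal = Real.exp (-(x₀ ^ m)) := htail x₀ hx₀
    have hchain :
        Real.exp (|l| * x₀ - x₀ ^ m) / 2 ≤ Real.cosh (|l| * x₀) * (μ {ω | x₀ < |ξ ω|}).toReal := by
      rw [hmeas]
      have h1 : Real.exp (|l| * x₀) / 2 ≤ Real.cosh (|l| * x₀) := by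
        rw [Real.cosh_eq]
        have := (Real.exp_pos (-(|l| * x₀))).le
        linarith
      have h2 : Real.exp (|l| * x₀ - x₀ ^ m) = Real.exp (|l| * x₀) * Real.exp (-(x₀ ^ m)) := by
        rw [← Real.exp_add]; ring_nf
      rw [h2]
      have h3 := (Real.exp_pos (-(x₀ ^ m))).le
      calc Real.exp (|l| * x₀) * Real.exp (-(x₀ ^ m)) / 2
          = (Real.exp (|l| * x₀) / 2) * Real.exp (-(x₀ ^ m)) := by ring
        _ ≤ Real.cosh (|l| * x₀) * Real.exp (-(x₀ ^ m)) :=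
            mul_le_mul_of_nonneg_right h1 h3
    calc Real.exp (|l| * x₀ - x₀ ^ m) / 2
        ≤ Real.cosh (|l| * x₀) * (μ {ω | x₀ < |ξ ω|}).toReal := hchain
      _ = ∫ _ω in {ω | x₀ < |ξ ω|}, Real.cosh (|l| * x₀) ∂μ := by
          rw [setIntegral_const]; rw [smul_eq_mul]; rw [measureReal_def]; ring
      _ ≤ ∫ ω in {ω | x₀ < |ξ ω|}, Real.cosh (l * ξ ω) ∂μ := by
          apply setIntegral_mono_on (integrableOn_const (measure_ne_top _ _))
            ((hIntCosh l).integrableOn) hset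
          intro ω hω
          apply Real.cosh_le_cosh.2
          rw [mem_setOf_eq] at hω
          rw [abs_mul l (ξ ω), abs_of_nonneg (mul_nonneg (abs_nonneg l) hx₀)]
          exact mul_le_mul_of_nonneg_left (le_of_lt hω) (abs_nonneg l)
      _ ≤ ∫ ω, Real.cosh (l * ξ ω) ∂μ :=
          setIntegral_le_integral (hIntCosh l) (ae_of_all _ fun ω => (Real.cosh_pos _).le)
  -- Upper bound general
  have hUB1 : ∀ l : ℝ, ∫ ω, Real.exp (l * ξ ω) ∂μ ≤ 2 * Real.exp (A * |l| ^ q) := by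
    intro l
    have hE := Real.exp_pos (A * |l| ^ q)
    calc ∫ ω, Real.exp (l * ξ ω) ∂μ ≤ ∫ ω, Real.exp (A * |l| ^ q) * Y ω ∂μ :=
          integral_mono (hIntExp l) (hYint.const_mul _) (hptw l)
      _ = Real.exp (A * |l| ^ q) * ∫ ω, Y ω ∂μ := integral_const_mul _ _
      _ ≤ Real.exp (A * |l| ^ q) * 2 := mul_le_mul_of_nonneg_left hYle hE.le
      _ = 2 * Real.exp (A * |l| ^ q) := by ring
  -- Upper bound for small l
  set K : ℝ := 2 * Real.exp (A * 4 ^ q) with hK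
  have hKpos : 0 < K := by positivity
  have hUB2 : ∀ l : ℝ, |l| ≤ 2 → ∫ ω, Real.exp (l * ξ ω) ∂μ ≤ 1 + l ^ 2 / 2 * K := by
    intro l hl
    rw [hZcosh l]
    have hpt : ∀ ω, Real.cosh (l * ξ ω) ≤ 1 + l ^ 2 / 2 * (Real.exp (A * 4 ^ q) * Y ω) := by
      intro ω
      have habs : |l * ξ ω| = |l| * |ξ ω| := abs_mul _ _
      have hXnn : (0:ℝ) ≤ |ξ ω| := abs_nonneg _
      have h1 := cosh_upper (l * ξ ω)
      have h2 : Real.exp |l * ξ ω| ≤ Real.exp (2 * |ξ ω|) := by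
        apply Real.exp_le_exp.2
        rw [habs]
        exact mul_le_mul_of_nonneg_right hl hXnn
      have h3 : (l * ξ ω) ^ 2 = l ^ 2 * |ξ ω| ^ 2 := by
        rw [mul_pow, sq_abs]
      have h5 : |ξ ω| ≤ Real.exp |ξ ω| := by
        have := Real.add_one_le_exp |ξ ω|
        linarith
      have h4 : |ξ ω| ^ 2 ≤ Real.exp (2 * |ξ ω|) := by
        calc |ξ ω| ^ 2 ≤ (Real.exp |ξ ω|) ^ 2 := pow_le_pow_left₀ hXnn h5 2
          _ = Real.exp (2 * |ξ ω|) := by rw [sq, ← Real.exp_add]; ring_nf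
      have h6 : 4 * |ξ ω| ≤ A * 4 ^ q + |ξ ω| ^ m / 2 := hyoung 4 _ (by norm_num) hXnn
      have h7 : Real.exp (2 * |ξ ω|) * Real.exp (2 * |ξ ω|) = Real.exp (4 * |ξ ω|) := by
        rw [← Real.exp_add]; ring_nf
      have h8 : Real.exp (4 * |ξ ω|) ≤ Real.exp (A * 4 ^ q) * Y ω := by
        rw [hYdef]
        rw [← Real.exp_add]
        exact Real.exp_le_exp.2 h6
      have h9 : (l * ξ ω) ^ 2 / 2 * Real.exp |l * ξ ω| ≤
          l ^ 2 / 2 * (Real.exp (A * 4 ^ q) * Y ω) := by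
        have e2nn := (Real.exp_pos (2 * |ξ ω|)).le
        have hexpnn := (Real.exp_pos |l * ξ ω|).le
        calc (l * ξ ω) ^ 2 / 2 * Real.exp |l * ξ ω|
            = l ^ 2 / 2 * (|ξ ω| ^ 2 * Real.exp |l * ξ ω|) := by rw [h3]; ring
          _ ≤ l ^ 2 / 2 * (Real.exp (2 * |ξ ω|) * Real.exp (2 * |ξ ω|)) := by
              apply mul_le_mul_of_nonneg_left _ (by positivity)
              apply mul_le_mul h4 h2 hexpnn e2nn
          _ = l ^ 2 / 2 * Real.exp (4 * |ξ ω|) := by rw [h7]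
          _ ≤ l ^ 2 / 2 * (Real.exp (A * 4 ^ q) * Y ω) := by
              apply mul_le_mul_of_nonneg_left h8 (by positivity)
      linarith
    calc ∫ ω, Real.cosh (l * ξ ω) ∂μ
        ≤ ∫ ω, (1 + l ^ 2 / 2 * (Real.exp (A * 4 ^ q) * Y ω)) ∂μ := by
          apply integral_mono (hIntCosh l) _ hpt
          exact (integrable_const 1).add ((hYint.const_mul _).const_mul _)
      _ = 1 + l ^ 2 / 2 * (Real.exp (A * 4 ^ q) * ∫ ω, Y ω ∂μ) := by
          rw [integral_add (integrable_const 1) (((hYint.const_mul _).const_mul _))]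
          simp [integral_const_mul]
      _ ≤ 1 + l ^ 2 / 2 * K := by
          rw [hK]
          have := mul_le_mul_of_nonneg_left hYle (Real.exp_pos (A * 4 ^ q)).le
          nlinarith [sq_nonneg l]
  -- final constants
  set cm : ℝ := 2 ^ q with hcm
  have hcm2 : (2:ℝ) ≤ cm := by
    rw [hcm]
    calc (2:ℝ) = 2 ^ (1:ℝ) := (Real.rpow_one 2).symm
      _ ≤ 2 ^ q := Real.rpow_le_rpow_left_iff one_lt_two |>.2 hq1.le
  have hcmpos : 0 < cm := lt_of_lt_of_le two_pos hcm2
  have hlog2 : 0 < Real.log 2 := Real.log_pos one_lt_two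
  set ε : ℝ := min (1/(2*cm)) (c₀/(3*Real.log 2*cm)) with hε
  have hεpos : 0 < ε := lt_min (by positivity) (by positivity)
  refine ⟨min (c₀/6) ε, max (Real.exp (A * 4 ^ q)) (A + Real.log 2 / 2), 1, ?_, ?_, one_pos, ?_⟩
  · exact lt_min (by positivity) hεpos
  · have h1 : min (c₀/6) ε ≤ c₀/6 := min_le_left _ _
    have h2 : c₀/6 ≤ 1 := by linarith
    have h3 : (1:ℝ) ≤ Real.exp (A * 4 ^ q) := Real.one_le_exp (by positivity)
    calc min (c₀/6) ε ≤ 1 := le_trans h1 h2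
      _ ≤ Real.exp (A * 4 ^ q) := h3
      _ ≤ _ := le_max_left _ _
  intro l
  set Z : ℝ := ∫ ω, Real.exp (l * ξ ω) ∂μ with hZ
  have hZp : 0 < Z := hZpos l
  set u : ℝ := l ^ 2 / 2 * c₀ with hu
  have hu0 : 0 ≤ u := by positivity
  have hZ1 : 1 + u ≤ Z := hLB1 l
  have hloglow : u / (1 + u) ≤ Real.log Z := by
    have h1 : Real.log (1 + u)⁻¹ ≤ (1 + u)⁻¹ - 1 :=
      Real.log_le_sub_one_of_pos (by positivity)
    rw [Real.log_inv] at h1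
    have h2 : 1 - (1 + u)⁻¹ ≤ Real.log (1 + u) := by linarith
    have h3 : 1 - (1 + u)⁻¹ = u / (1 + u) := by
      field_simp; ring
    have h4 : Real.log (1 + u) ≤ Real.log Z :=
      Real.log_le_log (by positivity) hZ1
    linarith [h3 ▸ h2]
  by_cases hcase : |l| ≤ 2
  · rw [if_pos hcase]
    have hl2 : l ^ 2 ≤ 4 := by
      have := sq_abs l
      nlinarith [abs_nonneg l]
    have hu2 : u ≤ 2 := by
      rw [hu]; nlinarith
    constructor
    · -- lower
      have h5 : u / 3 ≤ u / (1 + u) := by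
        apply div_le_div_of_nonneg_left hu0 (by positivity) (by linarith)
      have h6 : min (c₀/6) ε * l ^ 2 ≤ c₀/6 * l ^ 2 :=
        mul_le_mul_of_nonneg_right (min_le_left _ _) (sq_nonneg l)
      have h7 : c₀/6 * l ^ 2 = u / 3 := by rw [hu]; ring
      linarith
    · -- upper
      have h8 : Z ≤ 1 + l ^ 2 / 2 * K := hUB2 l hcase
      have h9 : Real.log Z ≤ Real.log (1 + l ^ 2 / 2 * K) :=
        Real.log_le_log hZp h8
      have h10 : Real.log (1 + l ^ 2 / 2 * K) ≤ l ^ 2 / 2 * K := by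
        have := Real.log_le_sub_one_of_pos (show (0:ℝ) < 1 + l ^ 2 / 2 * K by positivity)
        linarith
      have h11 : l ^ 2 / 2 * K = Real.exp (A * 4 ^ q) * l ^ 2 := by rw [hK]; ring
      have h12 : Real.exp (A * 4 ^ q) * l ^ 2 ≤
          max (Real.exp (A * 4 ^ q)) (A + Real.log 2 / 2) * l ^ 2 :=
        mul_le_mul_of_nonneg_right (le_max_left _ _) (sq_nonneg l)
      linarith
  · rw [if_neg hcase]
    push_neg at hcase
    have hs0 : (0:ℝ) < |l| := lt_trans two_pos hcase
    have hsq2 : (2:ℝ) ≤ |l| ^ q := by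
      calc (2:ℝ) ≤ cm := hcm2
        _ = 2 ^ q := hcm
        _ ≤ |l| ^ q := Real.rpow_le_rpow (by norm_num) hcase.le hq0.le
    have hsqnn : (0:ℝ) ≤ |l| ^ q := by positivity
    -- the key exponent computation
    set x₀ : ℝ := (|l|/2) ^ (1/(m-1)) with hx₀def
    have hhalf : (0:ℝ) < |l|/2 := by linarith
    have hx₀nn : 0 ≤ x₀ := Real.rpow_nonneg hhalf.le _
    have hx₀m : x₀ ^ m = (|l|/2) ^ q := by
      rw [hx₀def, ← Real.rpow_mul hhalf.le]
      congr 1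
      rw [hq]; field_simp
    have hlx₀ : |l| * x₀ = 2 * (|l|/2) ^ q := by
      have hexpq : (1:ℝ) + 1/(m-1) = q := by
        rw [hq]; field_simp; ring
      have h1 : (|l|/2) ^ (1:ℝ) * (|l|/2) ^ (1/(m-1)) = (|l|/2) ^ q := by
        rw [← Real.rpow_add hhalf, hexpq]
      rw [hx₀def, ← h1, Real.rpow_one]
      ring
    have hd : |l| * x₀ - x₀ ^ m = |l| ^ q / cm := by
      rw [hlx₀, hx₀m, Real.div_rpow (abs_nonneg l) (by norm_num), hcm]
      ring
    have hZlb : Real.exp (|l| ^ q / cm) / 2 ≤ Z := by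
      have := hLB2 l x₀ hx₀nn
      rw [hd] at this
      exact this
    have hlog1 : |l| ^ q / cm - Real.log 2 ≤ Real.log Z := by
      have h1 : Real.log (Real.exp (|l| ^ q / cm) / 2) ≤ Real.log Z :=
        Real.log_le_log (by positivity) hZlb
      rw [Real.log_div (Real.exp_ne_zero _) two_ne_zero, Real.log_exp] at h1
      exact h1
    have hlog2' : 2 * c₀ / 3 ≤ Real.log Z := by
      have hl4 : 4 ≤ l ^ 2 := by
        have := sq_abs l
        nlinarith
      have huge : 2 * c₀ ≤ u := by rw [hu]; nlinarith
      have h1 : 2 * c₀ / 3 ≤ u / (1 + u) := by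
        rw [div_le_div_iff₀ (by norm_num) (by positivity)]
        nlinarith
      linarith
    constructor
    · -- lower bound: min (c₀/6) ε * (1 * |l|^q) ≤ log Z
      have hmain : ε * |l| ^ q ≤ Real.log Z := by
        by_cases hbig : 2 * Real.log 2 ≤ |l| ^ q / cm
        · have h1 : |l| ^ q / cm - Real.log 2 ≥ |l| ^ q / cm / 2 := by linarith
          have h2 : ε * |l| ^ q ≤ (1/(2*cm)) * |l| ^ q :=
            mul_le_mul_of_nonneg_right (min_le_left _ _) hsqnn
          have h3 : (1/(2*cm)) * |l| ^ q = |l| ^ q / cm / 2 := by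
            rw [div_div]; ring
          linarith
        · push_neg at hbig
          have h1 : |l| ^ q < 2 * Real.log 2 * cm := by
            rw [div_lt_iff₀ hcmpos] at hbig
            linarith
          have h2 : ε * |l| ^ q ≤ (c₀/(3*Real.log 2*cm)) * |l| ^ q :=
            mul_le_mul_of_nonneg_right (min_le_right _ _) hsqnn
          have h3 : (c₀/(3*Real.log 2*cm)) * |l| ^ q ≤
              (c₀/(3*Real.log 2*cm)) * (2 * Real.log 2 * cm) :=
            mul_le_mul_of_nonneg_left h1.le (by positivity)
          have h4 : (c₀/(3*Real.log 2*cm)) * (2 * Real.log 2 * cm) = 2 * c₀ / 3 := by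
            field_simp
          linarith
      have : min (c₀/6) ε * (1 * |l| ^ q) ≤ ε * |l| ^ q := by
        rw [one_mul]
        exact mul_le_mul_of_nonneg_right (min_le_right _ _) hsqnn
      linarith
    · -- upper bound
      have h1 : Z ≤ 2 * Real.exp (A * |l| ^ q) := hUB1 l
      have h2 : Real.log Z ≤ Real.log (2 * Real.exp (A * |l| ^ q)) :=
        Real.log_le_log hZp h1
      rw [Real.log_mul two_ne_zero (Real.exp_ne_zero _), Real.log_exp] at h2
      have h3 : Real.log 2 ≤ Real.log 2 / 2 * |l| ^ q := by
        nlinarith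
      have h4 : Real.log 2 + A * |l| ^ q ≤ (A + Real.log 2 / 2) * |l| ^ q := by
        nlinarith
      have h5 : (A + Real.log 2 / 2) * |l| ^ q ≤
          max (Real.exp (A * 4 ^ q)) (A + Real.log 2 / 2) * (1 * |l| ^ q) := by
        rw [one_mul]
        exact mul_le_mul_of_nonneg_right (le_max_right _ _) hsqnn
      linarith
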